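/- arXiv:1405.6494 — 2 statements merged into one kernel-verified Lean document; each statement's English description precedes it below -/
import Mathlib

section
/- Provided f ∈ H¹(0,T; 𝓗), any solution w of D_w w = −f fulfills, for all t ∈ (0,T), the energy estimate E₁[w](t) + b̌₁ ∫₀ᵗ (‖w_ttt(τ)‖² + ‖𝒜^{1/2}w_tt(τ)‖² + ‖𝒜w_t(τ)‖² + ‖𝒜w(τ)‖²) dτ ≤ č₁ ( E₁[w](0) + ∫₀ᵗ (‖f_t(τ)‖² + ‖f(τ)‖²) dτ ), where b̌₁ > 0 is sufficiently small and č₁ > 0 is sufficiently large. -/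
open MeasureTheory
open scoped RealInnerProductSpace

section Aux
variable {H : Type*} [NormedAddCommGroup H] [InnerProductSpace ℝ H]


lemma gen_cauchy (B : H →L[ℝ] H) (hsym : ∀ x y : H, ⟪B x, y⟫ = ⟪x, B y⟫)
    (hpos : ∀ x : H, 0 ≤ ⟪B x, x⟫) (x : H) : ‖B x‖ ^ 2 ≤ ‖B‖ * ⟪B x, x⟫ := by
  have cs : ∀ y : H, ⟪B x, y⟫ ^ 2 ≤ ⟪B x, x⟫ * ⟪B y, y⟫ := by
    intro y
    have hq : ∀ t : ℝ, 0 ≤ ⟪B y, y⟫ * (t * t) + (2 * ⟪B x, y⟫) * t + ⟪B x, x⟫ := by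
      intro t
      have h0 := hpos (x + t • y)
      have hexp : ⟪B (x + t • y), x + t • y⟫
          = ⟪B x, x⟫ + t * ⟪B x, y⟫ + t * ⟪B y, x⟫ + (t * t) * ⟪B y, y⟫ := by
        simp only [map_add, ContinuousLinearMap.map_smul, inner_add_left, inner_add_right,
          real_inner_smul_left, real_inner_smul_right]
        ring
      have hyx : ⟪B y, x⟫ = ⟪B x, y⟫ := by
        rw [hsym y x, real_inner_comm]
      rw [hexp, hyx] at h0
      nlinarith [h0]
    have hd := discrim_le_zero hq
    rw [discrim] at hd
    nlinarith [hd]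
  have h1 := cs (B x)
  have h2 : ⟪B (B x), B x⟫ ≤ ‖B‖ * ‖B x‖ ^ 2 := by
    calc ⟪B (B x), B x⟫ ≤ ‖B (B x)‖ * ‖B x‖ := real_inner_le_norm _ _
    _ ≤ (‖B‖ * ‖B x‖) * ‖B x‖ := by
        gcongr
        exact B.le_opNorm _
    _ = ‖B‖ * ‖B x‖ ^ 2 := by ring
  have h3 : ⟪B x, B x⟫ = ‖B x‖ ^ 2 := real_inner_self_eq_norm_sq _
  rw [h3] at h1
  rcases eq_or_lt_of_le (sq_nonneg ‖B x‖) with h0 | h0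
  · nlinarith [hpos x, norm_nonneg B]
  · have h4 : (‖B x‖ ^ 2) * (‖B x‖ ^ 2) ≤ (⟪B x, x⟫ * ‖B‖) * ‖B x‖ ^ 2 := by
      nlinarith [mul_le_mul_of_nonneg_left h2 (hpos x)]
    have := le_of_mul_le_mul_right (by linarith [h4] : ‖B x‖ ^ 2 * ‖B x‖ ^ 2 ≤ (‖B‖ * ⟪B x, x⟫) * ‖B x‖ ^ 2) h0
    linarith

lemma coercive (A : H →L[ℝ] H) (hsym : ∀ x y : H, ⟪A x, y⟫ = ⟪x, A y⟫)
    (hspec : spectrum ℝ A ⊆ Set.Ioi (0 : ℝ)) :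
    ∃ m : ℝ, 0 < m ∧ ∀ x : H, m * ‖x‖ ^ 2 ≤ ⟪A x, x⟫ := by
  rcases subsingleton_or_nontrivial H with hs | hn
  · exact ⟨1, one_pos, fun x => by
      have : x = 0 := Subsingleton.elim x 0
      simp [this]⟩
  · set Sset : Set ℝ := (fun x : H => ⟪A x, x⟫) '' {x : H | ‖x‖ = 1} with hSset
    have hne : Sset.Nonempty := by
      obtain ⟨x, hx⟩ := exists_norm_eq H (le_of_lt one_pos)
      exact ⟨⟪A x, x⟫, ⟨x, hx, rfl⟩⟩
    have hbdd : BddBelow Sset := by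
      refine ⟨-‖A‖, ?_⟩
      rintro r ⟨x, hx, rfl⟩
      have h1 : |⟪A x, x⟫| ≤ ‖A x‖ * ‖x‖ := abs_real_inner_le_norm _ _
      have h2 : ‖A x‖ ≤ ‖A‖ * ‖x‖ := A.le_opNorm x
      have hx1 : ‖x‖ = 1 := hx
      rw [hx1] at h1 h2
      simp only [mul_one] at h1 h2
      cases abs_le.1 h1 with
      | intro hl hr => linarith
    set s : ℝ := sInf Sset with hs
    have hunit : ∀ x : H, ‖x‖ = 1 → s ≤ ⟪A x, x⟫ := fun x hx =>
      csInf_le hbdd ⟨x, hx, rfl⟩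
    have hcoer : ∀ x : H, s * ‖x‖ ^ 2 ≤ ⟪A x, x⟫ := by
      intro x
      rcases eq_or_ne x 0 with rfl | hx0
      · simp
      · have hnx : (0 : ℝ) < ‖x‖ := norm_pos_iff.2 hx0
        set u : H := ‖x‖⁻¹ • x with hu
        have hun : ‖u‖ = 1 := by
          rw [hu, norm_smul, norm_inv, norm_norm, inv_mul_cancel₀ (ne_of_gt hnx)]
        have := hunit u hun
        rw [hu, ContinuousLinearMap.map_smul, real_inner_smul_left, real_inner_smul_right] at this
        have h2 : s * ‖x‖ ^ 2 ≤ (‖x‖⁻¹ * (‖x‖⁻¹ * ⟪A x, x⟫)) * ‖x‖ ^ 2 := by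
          nlinarith [sq_nonneg ‖x‖]
        calc s * ‖x‖ ^ 2 ≤ (‖x‖⁻¹ * (‖x‖⁻¹ * ⟪A x, x⟫)) * ‖x‖ ^ 2 := h2
          _ = ⟪A x, x⟫ := by
            have hne0 : ‖x‖ ≠ 0 := ne_of_gt hnx
            field_simp
    have hmem : s ∈ spectrum ℝ A := by
      rw [spectrum.mem_iff]
      intro hU
      set B : H →L[ℝ] H := A - algebraMap ℝ (H →L[ℝ] H) s with hB
      have hBapp : ∀ x : H, B x = A x - s • x := by
        intro x; simp [hB, ContinuousLinearMap.sub_apply]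
      have hBsym : ∀ x y : H, ⟪B x, y⟫ = ⟪x, B y⟫ := by
        intro x y
        rw [hBapp, hBapp, inner_sub_left, inner_sub_right, hsym,
          real_inner_smul_left, real_inner_smul_right]
      have hBpos : ∀ x : H, 0 ≤ ⟪B x, x⟫ := by
        intro x
        rw [hBapp, inner_sub_left, real_inner_smul_left]
        have := hcoer x
        have h2 : ⟪x, x⟫ = ‖x‖ ^ 2 := real_inner_self_eq_norm_sq _
        rw [h2]; linarith
      obtain ⟨u, hu⟩ := hU
      set V : H →L[ℝ] H := ↑u⁻¹ with hV
      set ε : ℝ := (2 * (‖V‖ ^ 2 * ‖B‖ + 1))⁻¹ with hε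
      have hεpos : 0 < ε := by
        rw [hε]
        have : (0:ℝ) < ‖V‖ ^ 2 * ‖B‖ + 1 := by positivity
        positivity
      obtain ⟨r, ⟨x, hx, rfl⟩, hr⟩ := exists_lt_of_csInf_lt hne
        (lt_add_of_pos_right s hεpos)
      have hx1 : ‖x‖ = 1 := hx
      have hBxx : ⟪B x, x⟫ < ε := by
        rw [hBapp, inner_sub_left, real_inner_smul_left,
          real_inner_self_eq_norm_sq, hx1]
        simp only [one_pow, mul_one]
        linarith
      have hgc := gen_cauchy B hBsym hBpos x
      have hxV : x = V ((u : H →L[ℝ] H) x) := by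
        have h1 : (V * (u : H →L[ℝ] H)) = 1 := by
          rw [hV]; exact_mod_cast u.inv_mul
        have h2 := congrArg (fun (T : H →L[ℝ] H) => T x) h1
        simpa [ContinuousLinearMap.mul_apply] using h2.symm
      have hux : (u : H →L[ℝ] H) x = -(B x) := by
        rw [hu, hBapp]
        simp [ContinuousLinearMap.sub_apply]
      have hnormx : 1 ≤ ‖V‖ * ‖B x‖ := by
        have h1 : ‖x‖ ≤ ‖V‖ * ‖(u : H →L[ℝ] H) x‖ := by
          conv_lhs => rw [hxV]
          exact V.le_opNorm _
        rw [hux, norm_neg, hx1] at h1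
        exact h1
      have hfin : 1 ≤ ‖V‖ ^ 2 * (‖B‖ * ⟪B x, x⟫) := by
        nlinarith [norm_nonneg V, norm_nonneg (B x), hgc]
      have hlt : ‖V‖ ^ 2 * (‖B‖ * ⟪B x, x⟫) < (‖V‖ ^ 2 * ‖B‖ + 1) * ε := by
        have h1 : (0:ℝ) < ‖V‖ ^ 2 * ‖B‖ + 1 := by positivity
        nlinarith [hBpos x, hBxx, norm_nonneg V, norm_nonneg B,
          mul_nonneg (sq_nonneg ‖V‖) (norm_nonneg B)]
      have heps : (‖V‖ ^ 2 * ‖B‖ + 1) * ε = 1 / 2 := by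
        rw [hε]
        have : (0:ℝ) < ‖V‖ ^ 2 * ‖B‖ + 1 := by positivity
        field_simp
      rw [heps] at hlt
      linarith
    have hspos : 0 < s := hspec hmem
    exact ⟨s, hspos, hcoer⟩


variable {H : Type*} [NormedAddCommGroup H] [InnerProductSpace ℝ H]

private lemma young_aux (b a x : ℝ) (hb : 0 < b) :
    x * a ≤ b / 2 * a ^ 2 + 1 / b * x ^ 2 := by
  have hkey : b / 2 * a ^ 2 + 1 / b * x ^ 2 - x * a
      = 1 / (2 * b) * ((b * a - x) ^ 2 + x ^ 2) := by
    field_simp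
    ring
  nlinarith [mul_nonneg (by positivity : (0:ℝ) ≤ 1 / (2 * b))
    (by positivity : (0:ℝ) ≤ (b * a - x) ^ 2 + x ^ 2), hkey]

private lemma sq_sum_le (n u v z : ℝ) (hn : 0 ≤ n) (h : n ≤ u + v + z) :
    n ^ 2 ≤ 3 * u ^ 2 + 3 * v ^ 2 + 3 * z ^ 2 := by
  have h1 : n ^ 2 ≤ (u + v + z) ^ 2 := by nlinarith
  nlinarith [sq_nonneg (u - v), sq_nonneg (u - z), sq_nonneg (v - z)]

end Aux

/-- The Westervelt energy `E₁[w](t) = ½(‖𝒜^{1/2}w_tt‖² + ‖𝒜^{1/2}w_t‖² + ‖𝒜w‖²)`. -/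
noncomputable def E1 {H : Type*} [NormedAddCommGroup H] [InnerProductSpace ℝ H]
    (A Ahalf : H →L[ℝ] H) (w : ℝ → H) (t : ℝ) : ℝ :=
  (1/2) * (‖Ahalf (iteratedDeriv 2 w t)‖^2 + ‖Ahalf (deriv w t)‖^2 + ‖A (w t)‖^2)

set_option maxHeartbeats 2000000 in
/-- Lemma 3.7 / [BrKa14, Lemma 4.3]: energy estimate for solutions of
`D_w w = −f`, `D_w = ∂_t² + b𝒜∂_t + c²𝒜`. -/
theorem westervelt_energy_estimate
    {H : Type*} [NormedAddCommGroup H] [InnerProductSpace ℝ H] [CompleteSpace H]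
    [TopologicalSpace.SeparableSpace H]
    (A Ahalf : H →L[ℝ] H)
    (hAsym : ∀ x y : H, ⟪A x, y⟫ = ⟪x, A y⟫)
    (hAhalfsym : ∀ x y : H, ⟪Ahalf x, y⟫ = ⟪x, Ahalf y⟫)
    (hhalf : ∀ x : H, Ahalf (Ahalf x) = A x)
    (hspec : spectrum ℝ A ⊆ Set.Ioi (0 : ℝ))
    (heig : ∀ μ ∈ spectrum ℝ A, ∃ x : H, x ≠ 0 ∧ A x = μ • x)
    (b c : ℝ) (hb : 0 < b) (hc : 0 < c) :
    ∃ b1 : ℝ, 0 < b1 ∧ ∃ c1 : ℝ, 0 < c1 ∧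
      ∀ T : ℝ, 0 < T → ∀ f w : ℝ → H,
        ContDiff ℝ 1 f → ContDiff ℝ 3 w →
        IntegrableOn (fun τ => ‖f τ‖^2 + ‖deriv f τ‖^2) (Set.Ioc 0 T) →
        (∀ t ∈ Set.Ioo 0 T,
          iteratedDeriv 2 w t + b • A (deriv w t) + c^2 • A (w t) = - f t) →
        ∀ t ∈ Set.Ioo 0 T,
          E1 A Ahalf w t + b1 * ∫ τ in Set.Ioc 0 t,
              (‖iteratedDeriv 3 w τ‖^2 + ‖Ahalf (iteratedDeriv 2 w τ)‖^2
                + ‖A (deriv w τ)‖^2 + ‖A (w τ)‖^2)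
            ≤ c1 * (E1 A Ahalf w 0
                + ∫ τ in Set.Ioc 0 t, (‖deriv f τ‖^2 + ‖f τ‖^2)) := by
  
  obtain ⟨m, hm, hco⟩ := coercive A hAsym hspec
  set Ma : ℝ := ‖Ahalf‖ with hMadef
  -- basic operator norm facts
  have hAh : ∀ x : H, ‖Ahalf x‖ ^ 2 = ⟪A x, x⟫ := by
    intro x
    rw [← real_inner_self_eq_norm_sq, hAhalfsym, hhalf, real_inner_comm]
  have hm1 : ∀ x : H, m * ‖x‖ ^ 2 ≤ ‖Ahalf x‖ ^ 2 := fun x => by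
    rw [hAh]; exact hco x
  have hm2 : ∀ x : H, m * ‖Ahalf x‖ ^ 2 ≤ ‖A x‖ ^ 2 := fun x => by
    have h := hm1 (Ahalf x); rwa [hhalf] at h
  have hinnernn : ∀ x : H, 0 ≤ ⟪A x, x⟫ := fun x =>
    le_trans (by positivity) (hco x)
  have hMab : ∀ x : H, ‖A x‖ ≤ Ma * ‖Ahalf x‖ := fun x => by
    rw [← hhalf]; exact Ahalf.le_opNorm _
  -- constants
  set mi : ℝ := m⁻¹ with hmidef
  have hmipos : 0 < mi := by positivity
  have hmim : mi * m = 1 := inv_mul_cancel₀ (ne_of_gt hm)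
  set ci : ℝ := (c ^ 2)⁻¹ with hcidef
  have hcipos : 0 < ci := by positivity
  have hcic : ci * c ^ 2 = 1 := inv_mul_cancel₀ (by positivity)
  set κ : ℝ := max 1 ci with hκdef
  have hκ1 : (1:ℝ) ≤ κ := le_max_left _ _
  have hκci : ci ≤ κ := le_max_right _ _
  have hκpos : (0:ℝ) < κ := lt_of_lt_of_le one_pos hκ1
  have hκc : 1 ≤ κ * c ^ 2 := by
    calc (1:ℝ) = ci * c ^ 2 := hcic.symm
    _ ≤ κ * c ^ 2 := by nlinarith
  set K1 : ℝ := 3 * b ^ 2 + 3 * (c ^ 2 * c ^ 2) + mi + 1 + 3 * ci * ci * mi * mi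
      + 3 * b ^ 2 * ci * ci with hK1def
  have hK1pos : 0 < K1 := by positivity
  set K2 : ℝ := 3 + 3 * ci * ci with hK2def
  have hK2pos : 0 < K2 := by positivity
  set C0 : ℝ := 1 + c ^ 2 * Ma ^ 2 + c ^ 2 with hC0def
  have hC0pos : 0 < C0 := by positivity
  set b1 : ℝ := κ * (b / 2) / K1 with hb1def
  have hb1pos : 0 < b1 := by positivity
  have hb1K1 : b1 * K1 = κ * (b / 2) := by
    rw [hb1def]; field_simp
  set c1 : ℝ := max (κ * C0) (κ * (1 / b) + b1 * K2) with hc1def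
  have hc1pos : 0 < c1 := lt_of_lt_of_le (mul_pos hκpos hC0pos) (le_max_left _ _)
  refine ⟨b1, hb1pos, c1, hc1pos, ?_⟩
  intro T hT f w hf hw hint heq t ht
  -- rewrite iterated derivatives
  have hid2 : iteratedDeriv 2 w = deriv (deriv w) := by
    rw [iteratedDeriv_succ, iteratedDeriv_one]
  have hid3 : iteratedDeriv 3 w = deriv (deriv (deriv w)) := by
    rw [iteratedDeriv_succ, hid2]
  simp only [E1, hid2, hid3] at heq ⊢
  -- smoothness facts
  have hwd : Differentiable ℝ w := hw.differentiable (by norm_num)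
  have h32 : (3 : WithTop ℕ∞) = 2 + 1 := by norm_num
  have hwA := (contDiff_succ_iff_deriv).1 (h32 ▸ hw)
  have h21 : (2 : WithTop ℕ∞) = 1 + 1 := by norm_num
  have hwB := (contDiff_succ_iff_deriv).1 (h21 ▸ hwA.2.2)
  have hwC := contDiff_one_iff_deriv.1 hwB.2.2
  have hfA := contDiff_one_iff_deriv.1 hf
  set w1 : ℝ → H := deriv w with hw1def
  set w2 : ℝ → H := deriv w1 with hw2def
  set w3 : ℝ → H := deriv w2 with hw3def
  set f1 : ℝ → H := deriv f with hf1def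
  have hwd1 : Differentiable ℝ w1 := hwB.1
  have hwd2 : Differentiable ℝ w2 := hwC.1
  have hw1c : Continuous w1 := hwd1.continuous
  have hw2c : Continuous w2 := hwd2.continuous
  have hw3c : Continuous w3 := hwC.2
  have hwc : Continuous w := hwd.continuous
  have hfc : Continuous f := hfA.1.continuous
  have hf1c : Continuous f1 := hfA.2
  have hdw : ∀ τ, HasDerivAt w (w1 τ) τ := fun τ => (hwd τ).hasDerivAt
  have hdw1 : ∀ τ, HasDerivAt w1 (w2 τ) τ := fun τ => (hwd1 τ).hasDerivAt
  have hdw2 : ∀ τ, HasDerivAt w2 (w3 τ) τ := fun τ => (hwd2 τ).hasDerivAt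
  have hdf : ∀ τ, HasDerivAt f (f1 τ) τ := fun τ => (hfA.1 τ).hasDerivAt
  have hdA : ∀ (g : ℝ → H) (g' : H) (τ : ℝ), HasDerivAt g g' τ →
      HasDerivAt (fun s => A (g s)) (A g') τ := fun g g' τ h =>
    (A.hasFDerivAt).comp_hasDerivAt τ h
  -- the differentiated equation
  have heq' : ∀ τ ∈ Set.Ioo 0 T,
      w3 τ + b • A (w2 τ) + c ^ 2 • A (w1 τ) = -(f1 τ) := by
    intro τ hτ
    have hΦ : HasDerivAt (fun s => w2 s + b • A (w1 s) + c ^ 2 • A (w s) + f s)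
        (w3 τ + b • A (w2 τ) + c ^ 2 • A (w1 τ) + f1 τ) τ :=
      (((hdw2 τ).add ((hdA _ _ τ (hdw1 τ)).const_smul b)).add
        ((hdA _ _ τ (hdw τ)).const_smul (c ^ 2))).add (hdf τ)
    have hzero : (fun s => w2 s + b • A (w1 s) + c ^ 2 • A (w s) + f s)
        =ᶠ[nhds τ] (fun _ => (0:H)) := by
      filter_upwards [Ioo_mem_nhds hτ.1 hτ.2] with s hs
      have h := heq s hs
      rw [h]
      abel
    have hΦ0 : HasDerivAt (fun s => w2 s + b • A (w1 s) + c ^ 2 • A (w s) + f s)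
        (0 : H) τ :=
      (hasDerivAt_const τ (0:H)).congr_of_eventuallyEq hzero
    have huniq := hΦ.unique hΦ0
    exact eq_neg_of_add_eq_zero_left huniq

  -- equation rearrangements
  have hw3eq : ∀ τ ∈ Set.Ioo (0:ℝ) T,
      w3 τ = -(f1 τ) - b • A (w2 τ) - c ^ 2 • A (w1 τ) := by
    intro τ hτ
    rw [← heq' τ hτ]; abel
  have hw2eq : ∀ τ ∈ Set.Ioo (0:ℝ) T,
      w2 τ = -(f τ) - b • A (w1 τ) - c ^ 2 • A (w τ) := by
    intro τ hτ
    rw [← heq τ hτ]; abel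
  -- the auxiliary energy and its derivative
  set G : ℝ → ℝ := fun τ => 1/2 * ⟪A (w2 τ), w2 τ⟫ + c ^ 2 / 2 * ⟪A (w1 τ), A (w1 τ)⟫
      + 1/2 * ⟪A (w1 τ), w1 τ⟫ + c ^ 2 / 2 * ⟪A (w τ), A (w τ)⟫ with hGdef
  set G' : ℝ → ℝ := fun τ => ⟪A (w3 τ), w2 τ⟫ + c ^ 2 * ⟪A (w2 τ), A (w1 τ)⟫
      + ⟪A (w2 τ), w1 τ⟫ + c ^ 2 * ⟪A (w1 τ), A (w τ)⟫ with hG'def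
  have hGd : ∀ τ, HasDerivAt G (G' τ) τ := by
    intro τ
    have h1 := (HasDerivAt.inner ℝ (hdA w2 (w3 τ) τ (hdw2 τ)) (hdw2 τ)).const_mul (1/2 : ℝ)
    have h2 := (HasDerivAt.inner ℝ (hdA w1 (w2 τ) τ (hdw1 τ))
      (hdA w1 (w2 τ) τ (hdw1 τ))).const_mul (c ^ 2 / 2)
    have h3 := (HasDerivAt.inner ℝ (hdA w1 (w2 τ) τ (hdw1 τ)) (hdw1 τ)).const_mul (1/2 : ℝ)
    have h4 := (HasDerivAt.inner ℝ (hdA w (w1 τ) τ (hdw τ))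
      (hdA w (w1 τ) τ (hdw τ))).const_mul (c ^ 2 / 2)
    have hsum := ((h1.add h2).add h3).add h4
    have e1 : ⟪A (w2 τ), w3 τ⟫ = ⟪A (w3 τ), w2 τ⟫ := by rw [hAsym, real_inner_comm]
    have e2 : ⟪A (w1 τ), w2 τ⟫ = ⟪A (w2 τ), w1 τ⟫ := by rw [hAsym, real_inner_comm]
    have e3 : ⟪A (w1 τ), A (w2 τ)⟫ = ⟪A (w2 τ), A (w1 τ)⟫ := real_inner_comm _ _
    have e4 : ⟪A (w τ), A (w1 τ)⟫ = ⟪A (w1 τ), A (w τ)⟫ := real_inner_comm _ _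
    refine hsum.congr_deriv ?_
    simp only [hG'def]
    rw [e1, e2, e3, e4]
    ring
  -- continuity facts
  have hcontS : Continuous (fun τ => ‖A (w2 τ)‖^2 + ‖A (w1 τ)‖^2) := by
    exact ((A.continuous.comp hw2c).norm.pow 2).add ((A.continuous.comp hw1c).norm.pow 2)
  have hcontF : Continuous (fun τ => ‖f1 τ‖^2 + ‖f τ‖^2) := by
    exact (hf1c.norm.pow 2).add (hfc.norm.pow 2)
  have hcontD : Continuous (fun τ => ‖w3 τ‖^2 + ‖Ahalf (w2 τ)‖^2 + ‖A (w1 τ)‖^2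
      + ‖A (w τ)‖^2) := by
    exact (((hw3c.norm.pow 2).add ((Ahalf.continuous.comp hw2c).norm.pow 2)).add
      ((A.continuous.comp hw1c).norm.pow 2)).add ((A.continuous.comp hwc).norm.pow 2)
  have hG'c : Continuous G' := by
    rw [hG'def]
    exact ((((A.continuous.comp hw3c).inner hw2c).add
      (continuous_const.mul ((A.continuous.comp hw2c).inner (A.continuous.comp hw1c)))).add
      ((A.continuous.comp hw2c).inner hw1c)).add
      (continuous_const.mul ((A.continuous.comp hw1c).inner (A.continuous.comp hwc)))
  -- fundamental theorem of calculus
  have hFTC : ∫ τ in Set.Ioc 0 t, G' τ = G t - G 0 := by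
    rw [← intervalIntegral.integral_of_le ht.1.le]
    exact intervalIntegral.integral_eq_sub_of_hasDerivAt (fun τ _ => hGd τ)
      (hG'c.intervalIntegrable 0 t)
  have hIoo : ∀ τ ∈ Set.Ioc (0:ℝ) t, τ ∈ Set.Ioo (0:ℝ) T := fun τ hτ =>
    ⟨hτ.1, lt_of_le_of_lt hτ.2 ht.2⟩
  -- pointwise differential inequality
  have hGle : ∀ τ ∈ Set.Ioc (0:ℝ) t, G' τ ≤ -(b/2) * (‖A (w2 τ)‖^2 + ‖A (w1 τ)‖^2)
      + 1/b * (‖f1 τ‖^2 + ‖f τ‖^2) := by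
    intro τ hτ
    have hτ' := hIoo τ hτ
    have i1 : ⟪A (w3 τ), w2 τ⟫ = -⟪f1 τ, A (w2 τ)⟫ - b * ‖A (w2 τ)‖^2
        - c ^ 2 * ⟪A (w1 τ), A (w2 τ)⟫ := by
      rw [hAsym, hw3eq τ hτ']
      simp only [inner_sub_left, inner_neg_left, real_inner_smul_left,
        real_inner_self_eq_norm_sq]
    have i2 : ⟪A (w2 τ), w1 τ⟫ = -⟪f τ, A (w1 τ)⟫ - b * ‖A (w1 τ)‖^2
        - c ^ 2 * ⟪A (w τ), A (w1 τ)⟫ := by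
      rw [hAsym, hw2eq τ hτ']
      simp only [inner_sub_left, inner_neg_left, real_inner_smul_left,
        real_inner_self_eq_norm_sq]
    have e3 : ⟪A (w1 τ), A (w2 τ)⟫ = ⟪A (w2 τ), A (w1 τ)⟫ := real_inner_comm _ _
    have e4 : ⟪A (w τ), A (w1 τ)⟫ = ⟪A (w1 τ), A (w τ)⟫ := real_inner_comm _ _
    have y1 : -⟪f1 τ, A (w2 τ)⟫ ≤ b/2 * ‖A (w2 τ)‖^2 + 1/b * ‖f1 τ‖^2 := by
      have habs := abs_real_inner_le_norm (f1 τ) (A (w2 τ))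
      have hy := young_aux b ‖A (w2 τ)‖ ‖f1 τ‖ hb
      cases' abs_le.1 habs with hl hr
      linarith
    have y2 : -⟪f τ, A (w1 τ)⟫ ≤ b/2 * ‖A (w1 τ)‖^2 + 1/b * ‖f τ‖^2 := by
      have habs := abs_real_inner_le_norm (f τ) (A (w1 τ))
      have hy := young_aux b ‖A (w1 τ)‖ ‖f τ‖ hb
      cases' abs_le.1 habs with hl hr
      linarith
    simp only [hG'def]
    rw [i1, i2, e3, e4]
    linarith only [y1, y2]
  -- pointwise bound on the dissipation integrand
  have hDle : ∀ τ ∈ Set.Ioc (0:ℝ) t,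
      ‖w3 τ‖^2 + ‖Ahalf (w2 τ)‖^2 + ‖A (w1 τ)‖^2 + ‖A (w τ)‖^2
        ≤ K1 * (‖A (w2 τ)‖^2 + ‖A (w1 τ)‖^2) + K2 * (‖f1 τ‖^2 + ‖f τ‖^2) := by
    intro τ hτ
    have hτ' := hIoo τ hτ
    have hc2 : (0:ℝ) < c ^ 2 := by positivity
    have hn3 : ‖w3 τ‖ ≤ ‖f1 τ‖ + b * ‖A (w2 τ)‖ + c ^ 2 * ‖A (w1 τ)‖ := by
      rw [hw3eq τ hτ']
      calc ‖-(f1 τ) - b • A (w2 τ) - c ^ 2 • A (w1 τ)‖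
          ≤ ‖-(f1 τ) - b • A (w2 τ)‖ + ‖c ^ 2 • A (w1 τ)‖ := norm_sub_le _ _
        _ ≤ ‖f1 τ‖ + ‖b • A (w2 τ)‖ + ‖c ^ 2 • A (w1 τ)‖ := by
            have h := norm_sub_le (-(f1 τ)) (b • A (w2 τ))
            rw [norm_neg] at h
            linarith
        _ = ‖f1 τ‖ + b * ‖A (w2 τ)‖ + c ^ 2 * ‖A (w1 τ)‖ := by
            rw [norm_smul, norm_smul, Real.norm_eq_abs, Real.norm_eq_abs,
              abs_of_pos hb, abs_of_pos hc2]
    have hs3 : ‖w3 τ‖^2 ≤ 3 * ‖f1 τ‖^2 + 3 * b^2 * ‖A (w2 τ)‖^2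
        + 3 * (c^2*c^2) * ‖A (w1 τ)‖^2 := by
      have h := sq_sum_le ‖w3 τ‖ ‖f1 τ‖ (b * ‖A (w2 τ)‖) (c ^ 2 * ‖A (w1 τ)‖)
        (norm_nonneg _) hn3
      calc ‖w3 τ‖^2 ≤ 3 * ‖f1 τ‖^2 + 3 * (b * ‖A (w2 τ)‖)^2 + 3 * (c^2 * ‖A (w1 τ)‖)^2 := h
        _ = 3 * ‖f1 τ‖^2 + 3 * b^2 * ‖A (w2 τ)‖^2 + 3 * (c^2*c^2) * ‖A (w1 τ)‖^2 := by ring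
    have hs2 : ‖Ahalf (w2 τ)‖^2 ≤ mi * ‖A (w2 τ)‖^2 := by
      have h := hm2 (w2 τ)
      calc ‖Ahalf (w2 τ)‖^2 = mi * (m * ‖Ahalf (w2 τ)‖^2) := by
            rw [← mul_assoc, hmim, one_mul]
        _ ≤ mi * ‖A (w2 τ)‖^2 := mul_le_mul_of_nonneg_left h hmipos.le
    have hsw2 : ‖w2 τ‖^2 ≤ mi * mi * ‖A (w2 τ)‖^2 := by
      have h := hm1 (w2 τ)
      calc ‖w2 τ‖^2 = mi * (m * ‖w2 τ‖^2) := by rw [← mul_assoc, hmim, one_mul]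
        _ ≤ mi * ‖Ahalf (w2 τ)‖^2 := mul_le_mul_of_nonneg_left h hmipos.le
        _ ≤ mi * (mi * ‖A (w2 τ)‖^2) := mul_le_mul_of_nonneg_left hs2 hmipos.le
        _ = mi * mi * ‖A (w2 τ)‖^2 := by ring
    have hnw : c^2 * ‖A (w τ)‖ ≤ ‖f τ‖ + ‖w2 τ‖ + b * ‖A (w1 τ)‖ := by
      have he : c ^ 2 • A (w τ) = -(f τ) - w2 τ - b • A (w1 τ) := by
        rw [hw2eq τ hτ']; abel
      calc c^2 * ‖A (w τ)‖ = ‖c ^ 2 • A (w τ)‖ := by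
            rw [norm_smul, Real.norm_eq_abs, abs_of_pos hc2]
        _ = ‖-(f τ) - w2 τ - b • A (w1 τ)‖ := by rw [he]
        _ ≤ ‖-(f τ) - w2 τ‖ + ‖b • A (w1 τ)‖ := norm_sub_le _ _
        _ ≤ ‖f τ‖ + ‖w2 τ‖ + ‖b • A (w1 τ)‖ := by
            have h := norm_sub_le (-(f τ)) (w2 τ)
            rw [norm_neg] at h
            linarith
        _ = ‖f τ‖ + ‖w2 τ‖ + b * ‖A (w1 τ)‖ := by
            rw [norm_smul, Real.norm_eq_abs, abs_of_pos hb]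
    have hs4 : ‖A (w τ)‖^2 ≤ 3*ci*ci*‖f τ‖^2 + 3*ci*ci*mi*mi*‖A (w2 τ)‖^2
        + 3*b^2*ci*ci*‖A (w1 τ)‖^2 := by
      have hsq : (c^2*‖A (w τ)‖)^2 ≤ 3 * ‖f τ‖^2 + 3 * (mi * mi * ‖A (w2 τ)‖^2)
          + 3 * b^2 * ‖A (w1 τ)‖^2 := by
        have h := sq_sum_le (c^2*‖A (w τ)‖) ‖f τ‖ ‖w2 τ‖ (b * ‖A (w1 τ)‖)
          (by positivity) hnw
        have h2 : 3 * ‖w2 τ‖^2 ≤ 3 * (mi * mi * ‖A (w2 τ)‖^2) := by linarith [hsw2]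
        calc (c^2*‖A (w τ)‖)^2
            ≤ 3 * ‖f τ‖^2 + 3 * ‖w2 τ‖^2 + 3 * (b * ‖A (w1 τ)‖)^2 := h
          _ ≤ 3 * ‖f τ‖^2 + 3 * (mi * mi * ‖A (w2 τ)‖^2) + 3 * (b * ‖A (w1 τ)‖)^2 := by
              linarith
          _ = 3 * ‖f τ‖^2 + 3 * (mi * mi * ‖A (w2 τ)‖^2) + 3 * b^2 * ‖A (w1 τ)‖^2 := by
              ring
      have hid : ‖A (w τ)‖^2 = ci * ci * (c^2*‖A (w τ)‖)^2 := by
        have h : ci * ci * (c^2*‖A (w τ)‖)^2 = (ci * c^2) * (ci * c^2) * ‖A (w τ)‖^2 := by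
          ring
        rw [h, hcic]
        ring
      rw [hid]
      calc ci * ci * (c^2*‖A (w τ)‖)^2
          ≤ ci * ci * (3 * ‖f τ‖^2 + 3 * (mi * mi * ‖A (w2 τ)‖^2) + 3 * b^2 * ‖A (w1 τ)‖^2) :=
            mul_le_mul_of_nonneg_left hsq (by positivity)
        _ = 3*ci*ci*‖f τ‖^2 + 3*ci*ci*mi*mi*‖A (w2 τ)‖^2 + 3*b^2*ci*ci*‖A (w1 τ)‖^2 := by
            ring
    have p1 : 0 ≤ (3*(c^2*c^2) + 1 + 3*b^2*ci*ci) * ‖A (w2 τ)‖^2 := by positivity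
    have p2 : 0 ≤ (3*b^2 + mi + 3*ci*ci*mi*mi) * ‖A (w1 τ)‖^2 := by positivity
    have p3 : 0 ≤ 3*ci*ci*‖f1 τ‖^2 := by positivity
    have p4 : 0 ≤ 3*‖f τ‖^2 := by positivity
    rw [hK1def, hK2def]
    linarith only [hs3, hs2, hs4, p1, p2, p3, p4]
  -- integral abbreviations
  set IS : ℝ := ∫ τ in Set.Ioc 0 t, (‖A (w2 τ)‖^2 + ‖A (w1 τ)‖^2) with hISdef
  set IF : ℝ := ∫ τ in Set.Ioc 0 t, (‖f1 τ‖^2 + ‖f τ‖^2) with hIFdef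
  set ID : ℝ := ∫ τ in Set.Ioc 0 t, (‖w3 τ‖^2 + ‖Ahalf (w2 τ)‖^2 + ‖A (w1 τ)‖^2
      + ‖A (w τ)‖^2) with hIDdef
  have hIFnn : 0 ≤ IF := by
    rw [hIFdef]
    apply setIntegral_nonneg measurableSet_Ioc
    intro τ _
    positivity
  -- integrated energy inequality
  have hI1 : G t - G 0 ≤ -(b/2) * IS + 1/b * IF := by
    rw [← hFTC]
    calc ∫ τ in Set.Ioc 0 t, G' τ
        ≤ ∫ τ in Set.Ioc 0 t, (-(b/2) * (‖A (w2 τ)‖^2 + ‖A (w1 τ)‖^2)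
            + 1/b * (‖f1 τ‖^2 + ‖f τ‖^2)) :=
          setIntegral_mono_on (hG'c.integrableOn_Ioc)
            (((continuous_const.mul hcontS).add (continuous_const.mul hcontF)).integrableOn_Ioc)
            measurableSet_Ioc hGle
      _ = -(b/2) * IS + 1/b * IF := by
          rw [integral_add ((hcontS.integrableOn_Ioc).const_mul _)
            ((hcontF.integrableOn_Ioc).const_mul _), integral_const_mul, integral_const_mul,
            hISdef, hIFdef]
  -- integrated dissipation bound
  have hI2 : ID ≤ K1 * IS + K2 * IF := by
    rw [hIDdef]
    calc ∫ τ in Set.Ioc 0 t, (‖w3 τ‖^2 + ‖Ahalf (w2 τ)‖^2 + ‖A (w1 τ)‖^2 + ‖A (w τ)‖^2)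
        ≤ ∫ τ in Set.Ioc 0 t, (K1 * (‖A (w2 τ)‖^2 + ‖A (w1 τ)‖^2)
            + K2 * (‖f1 τ‖^2 + ‖f τ‖^2)) :=
          setIntegral_mono_on (hcontD.integrableOn_Ioc)
            (((continuous_const.mul hcontS).add (continuous_const.mul hcontF)).integrableOn_Ioc)
            measurableSet_Ioc hDle
      _ = K1 * IS + K2 * IF := by
          rw [integral_add ((hcontS.integrableOn_Ioc).const_mul _)
            ((hcontF.integrableOn_Ioc).const_mul _), integral_const_mul, integral_const_mul,
            hISdef, hIFdef]
  -- comparison of E1 with G at time t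
  have hE1t : 1/2 * (‖Ahalf (w2 t)‖^2 + ‖Ahalf (w1 t)‖^2 + ‖A (w t)‖^2) ≤ κ * G t := by
    simp only [hGdef]
    rw [hAh (w2 t), hAh (w1 t), real_inner_self_eq_norm_sq, real_inner_self_eq_norm_sq]
    have q1 : 0 ≤ (κ - 1) * ⟪A (w2 t), w2 t⟫ := mul_nonneg (by linarith) (hinnernn _)
    have q2 : 0 ≤ (κ - 1) * ⟪A (w1 t), w1 t⟫ := mul_nonneg (by linarith) (hinnernn _)
    have q3 : 0 ≤ (κ * c^2 - 1) * ‖A (w t)‖^2 := mul_nonneg (by linarith) (sq_nonneg _)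
    have q4 : 0 ≤ κ * c^2 * ‖A (w1 t)‖^2 := by positivity
    linarith only [q1, q2, q3, q4]
  -- comparison of G with E1 at time 0
  have hMa1 : ‖A (w1 0)‖^2 ≤ Ma^2 * ‖Ahalf (w1 0)‖^2 := by
    nlinarith [hMab (w1 0), norm_nonneg (A (w1 0)), norm_nonneg (Ahalf (w1 0)),
      norm_nonneg Ahalf]
  have hG0 : G 0 ≤ C0 * (1/2 * (‖Ahalf (w2 0)‖^2 + ‖Ahalf (w1 0)‖^2 + ‖A (w 0)‖^2)) := by
    simp only [hGdef]
    rw [← hAh (w2 0), ← hAh (w1 0), real_inner_self_eq_norm_sq, real_inner_self_eq_norm_sq,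
      hC0def]
    have r0 := mul_le_mul_of_nonneg_left hMa1 (by positivity : (0:ℝ) ≤ c^2/2)
    have r1 : 0 ≤ (c^2*Ma^2 + c^2) * ‖Ahalf (w2 0)‖^2 := by positivity
    have r2 : 0 ≤ c^2 * ‖Ahalf (w1 0)‖^2 := by positivity
    have r3 : 0 ≤ (1 + c^2*Ma^2) * ‖A (w 0)‖^2 := by positivity
    linarith only [r0, r1, r2, r3]
  have hE10nn : 0 ≤ 1/2 * (‖Ahalf (w2 0)‖^2 + ‖Ahalf (w1 0)‖^2 + ‖A (w 0)‖^2) := by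
    positivity
  -- final assembly
  have s1 : b1 * ID ≤ b1 * (K1 * IS + K2 * IF) := mul_le_mul_of_nonneg_left hI2 hb1pos.le
  have t2 : κ * (G t - G 0) ≤ κ * (-(b/2) * IS + 1/b * IF) :=
    mul_le_mul_of_nonneg_left hI1 hκpos.le
  have t3 : κ * G 0 ≤ κ * (C0 * (1/2 * (‖Ahalf (w2 0)‖^2 + ‖Ahalf (w1 0)‖^2
      + ‖A (w 0)‖^2))) := mul_le_mul_of_nonneg_left hG0 hκpos.le
  have t4 : (κ * C0) * (1/2 * (‖Ahalf (w2 0)‖^2 + ‖Ahalf (w1 0)‖^2 + ‖A (w 0)‖^2))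
      ≤ c1 * (1/2 * (‖Ahalf (w2 0)‖^2 + ‖Ahalf (w1 0)‖^2 + ‖A (w 0)‖^2)) :=
    mul_le_mul_of_nonneg_right (le_max_left _ _) hE10nn
  have t5 : (κ * (1 / b) + b1 * K2) * IF ≤ c1 * IF :=
    mul_le_mul_of_nonneg_right (le_max_right _ _) hIFnn
  have hb1K1IS : b1 * K1 * IS = κ * (b/2) * IS := by rw [hb1K1]
  clear_value Ma mi ci κ K1 K2 C0 b1 c1 IS IF ID G G' w1 w2 w3 f1
  linarith only [hE1t, s1, t2, t3, t4, t5, hb1K1IS]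
end

section
/- Provided f ∈ H¹(0,T; 𝓗), any solution u of D_w D_h u = −f satisfies, for all t ∈ (0,T), ℰ[u](t) + ∫₀ᵗ ( ℰ[u](τ) + k[u](τ) ) dτ ≤ ĉ₂ ( ℰ[u](0) + ∫₀ᵗ ( ‖f(τ)‖² + ‖f_t(τ)‖² ) dτ ) for some sufficiently large constant ĉ₂ > 0. -/
open MeasureTheory
open scoped RealInnerProductSpace



section EnergyAux
variable {H : Type*} [NormedAddCommGroup H] [InnerProductSpace ℝ H]

lemma energy_hda_clm (B : H →L[ℝ] H) {h : ℝ → H} {h' : H} {t : ℝ} (hh : HasDerivAt h h' t) :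
    HasDerivAt (fun s => B (h s)) (B h') t :=
  B.hasFDerivAt.comp_hasDerivAt t hh

lemma energy_hda_half_sq (B : H →L[ℝ] H) {h : ℝ → H} {h' : H} {t : ℝ}
    (hh : HasDerivAt h h' t) :
    HasDerivAt (fun s => (1/2 : ℝ) * ‖B (h s)‖^2) ⟪B h', B (h t)⟫ t := by
  have hfun : (fun s => (1/2:ℝ) * ‖B (h s)‖^2) = fun s => (1/2:ℝ) * ⟪B (h s), B (h s)⟫ :=
    funext fun s => by rw [real_inner_self_eq_norm_sq]
  rw [hfun]
  have h2 := (HasDerivAt.inner ℝ (energy_hda_clm B hh) (energy_hda_clm B hh)).const_mul (1/2:ℝ)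
  have h3 : ⟪B h', B (h t)⟫ = 1/2 * (⟪B (h t), B h'⟫ + ⟪B h', B (h t)⟫) := by
    rw [real_inner_comm (B h') (B (h t))]; ring
  rw [h3]; exact h2

lemma energy_young (x y η : ℝ) (hη : 0 < η) : x*y ≤ (η/2)*x^2 + (1/(2*η))*y^2 := by
  have h : (η/2)*x^2 + (1/(2*η))*y^2 - x*y = (η*x - y)^2/(2*η) := by field_simp; ring
  have h2 : 0 ≤ (η*x - y)^2/(2*η) := by positivity
  linarith

lemma energy_young' (x y η iη : ℝ) (hη : 0 < η) (h1 : η * iη = 1) :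
    x*y ≤ (η/2)*x^2 + (iη/2)*y^2 := by
  have hiη : iη = 1/η := eq_one_div_of_mul_eq_one_left (by linarith [mul_comm η iη] : iη * η = 1)
  have h2 : (iη/2)*y^2 = (1/(2*η))*y^2 := by rw [hiη]; ring
  have := energy_young x y η hη
  linarith

end EnergyAux
/-- `E₂[u](t) = ½(‖𝒜^{1/2}u_ttt‖² + ‖𝒜u_tt‖² + ‖𝒜^{3/2}u_t‖² + ‖𝒜^{3/2}u‖²)`. -/
noncomputable def E2 {H : Type*} [NormedAddCommGroup H] [InnerProductSpace ℝ H]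
    (A Ahalf : H →L[ℝ] H) (u : ℝ → H) (t : ℝ) : ℝ :=
  (1/2) * (‖Ahalf (iteratedDeriv 3 u t)‖^2 + ‖A (iteratedDeriv 2 u t)‖^2
    + ‖Ahalf (A (deriv u t))‖^2 + ‖Ahalf (A (u t))‖^2)

/-- `ℰ[u](t) = E₁[D_h u](t) + E₂[u](t)` with `D_h = ∂_t + a𝒜`. -/
noncomputable def calE {H : Type*} [NormedAddCommGroup H] [InnerProductSpace ℝ H]
    (A Ahalf : H →L[ℝ] H) (a : ℝ) (u : ℝ → H) (t : ℝ) : ℝ :=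
  E1 A Ahalf (fun τ => deriv u τ + a • A (u τ)) t + E2 A Ahalf u t

/-- `k[u](t) = ‖u_tttt‖² + ‖𝒜u_ttt‖² + ‖𝒜^{3/2}u_tt‖² + ‖𝒜²u_t‖² + ‖𝒜²u‖²`. -/
noncomputable def kE {H : Type*} [NormedAddCommGroup H] [InnerProductSpace ℝ H]
    (A Ahalf : H →L[ℝ] H) (u : ℝ → H) (t : ℝ) : ℝ :=
  ‖iteratedDeriv 4 u t‖^2 + ‖A (iteratedDeriv 3 u t)‖^2
    + ‖Ahalf (A (iteratedDeriv 2 u t))‖^2 + ‖A (A (deriv u t))‖^2 + ‖A (A (u t))‖^2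

set_option maxHeartbeats 2000000 in
/-- Lemma 3.8: energy estimate for solutions of `D_w D_h u = −f`. -/
theorem combined_energy_estimate
    {H : Type*} [NormedAddCommGroup H] [InnerProductSpace ℝ H] [CompleteSpace H]
    [TopologicalSpace.SeparableSpace H]
    (A Ahalf : H →L[ℝ] H)
    (hAsym : ∀ x y : H, ⟪A x, y⟫ = ⟪x, A y⟫)
    (hAhalfsym : ∀ x y : H, ⟪Ahalf x, y⟫ = ⟪x, Ahalf y⟫)
    (hhalf : ∀ x : H, Ahalf (Ahalf x) = A x)
    (hspec : spectrum ℝ A ⊆ Set.Ioi (0 : ℝ))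
    (heig : ∀ μ ∈ spectrum ℝ A, ∃ x : H, x ≠ 0 ∧ A x = μ • x)
    (Cp : ℝ) (hCp : 0 < Cp)
    (hPoincare : ∀ x : H, ‖x‖ ≤ Cp * ‖Ahalf x‖)
    (a b c : ℝ) (ha : 0 < a) (hb : 0 < b) (hc : 0 < c) :
    ∃ c2 : ℝ, 0 < c2 ∧
      ∀ T : ℝ, 0 < T → ∀ f u : ℝ → H,
        ContDiff ℝ 1 f → ContDiff ℝ 4 u →
        IntegrableOn (fun τ => ‖f τ‖^2 + ‖deriv f τ‖^2) (Set.Ioc 0 T) →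
        IntegrableOn (fun τ => calE A Ahalf a u τ + kE A Ahalf u τ) (Set.Ioc 0 T) →
        (∀ t ∈ Set.Ioo 0 T,
          iteratedDeriv 2 (fun τ => deriv u τ + a • A (u τ)) t
            + b • A (deriv (fun τ => deriv u τ + a • A (u τ)) t)
            + c^2 • A (deriv u t + a • A (u t)) = - f t) →
        ∀ t ∈ Set.Ioo 0 T,
          calE A Ahalf a u t
              + ∫ τ in Set.Ioc 0 t, (calE A Ahalf a u τ + kE A Ahalf u τ)
            ≤ c2 * (calE A Ahalf a u 0
                + ∫ τ in Set.Ioc 0 t, (‖f τ‖^2 + ‖deriv f τ‖^2))  := by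
  -- ======== constants ========
  obtain ⟨ia, hai, hia0⟩ : ∃ x : ℝ, a * x = 1 ∧ 0 < x :=
    ⟨a⁻¹, mul_inv_cancel₀ (ne_of_gt ha), inv_pos.mpr ha⟩
  obtain ⟨ib, hbi, hib0⟩ : ∃ x : ℝ, b * x = 1 ∧ 0 < x :=
    ⟨b⁻¹, mul_inv_cancel₀ (ne_of_gt hb), inv_pos.mpr hb⟩
  obtain ⟨ic2, hci, hic0⟩ : ∃ x : ℝ, c^2 * x = 1 ∧ 0 < x :=
    ⟨(c^2)⁻¹, mul_inv_cancel₀ (by positivity), inv_pos.mpr (by positivity)⟩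
  set N : ℝ := ‖Ahalf‖ with hNd
  have hN0 : 0 ≤ N := norm_nonneg _
  obtain ⟨Cu, hCud⟩ : ∃ x : ℝ, x = (ia/2) * (2 + Cp^2 + 3*b^2 + 3*c^4) := ⟨_, rfl⟩
  have hCu0 : 0 < Cu := by rw [hCud]; positivity
  obtain ⟨ε, hεd⟩ : ∃ x : ℝ, x = 2*(Cu+1)*ic2 := ⟨_, rfl⟩
  have hε0 : 0 < ε := by rw [hεd]; positivity
  obtain ⟨M, hMd⟩ : ∃ x : ℝ,
      x = (4*ib/3)*(ε*(Cp^2 + b^2*ic2) + Cu + 1) + (ε*Cp + 1)*(1 + ic2) := ⟨_, rfl⟩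
  have hM0 : 0 < M := by rw [hMd]; positivity
  obtain ⟨Ct, hCtd⟩ : ∃ x : ℝ, x = M*ib + ε*ic2 + 3*(ia/2) + 6 := ⟨_, rfl⟩
  have hCt0 : 0 < Ct := by rw [hCtd]; positivity
  obtain ⟨Kd, hKdd⟩ : ∃ x : ℝ,
      x = (2 + Cp^2 + 6*b^2 + 6*c^4 + 2*a^2) * (1 + 2*ia) := ⟨_, rfl⟩
  have hKd0 : 0 < Kd := by rw [hKdd]; positivity
  have hSia : 0 ≤ (2 + Cp^2 + 6*b^2 + 6*c^4 + 2*a^2) * (2*ia) := by positivity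
  have hKd1 : 1 ≤ Kd := by
    rw [hKdd]
    linarith only [sq_nonneg Cp, sq_nonneg b, sq_nonneg (c^2), sq_nonneg a, hSia]
  obtain ⟨iK, hKi, hiK0⟩ : ∃ x : ℝ, Kd * x = 1 ∧ 0 < x :=
    ⟨Kd⁻¹, mul_inv_cancel₀ (ne_of_gt hKd0), inv_pos.mpr hKd0⟩
  have hiK1 : iK ≤ 1 := by linarith only [mul_nonneg (sub_nonneg.mpr hKd1) hiK0.le, hKi]
  obtain ⟨β, hβd⟩ : ∃ x : ℝ, x = M*(1+c^2)*(1+N^2) + ε*Cp + 1 := ⟨_, rfl⟩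
  have hβ0 : 0 < β := by rw [hβd]; positivity
  -- scalar coefficient facts
  have hε2 : ia/2 + 1 ≤ ε*(c^2/2) := by
    have h1 : ε*(c^2/2) = Cu + 1 := by rw [hεd]; linear_combination (Cu+1)*hci
    have h2 : ia/2 ≤ Cu := by
      rw [hCud]
      linarith only [mul_nonneg hia0.le (sq_nonneg Cp), mul_nonneg hia0.le (sq_nonneg b),
        mul_nonneg hia0.le (sq_nonneg (c^2)), hia0]
    linarith
  have hsplitM : (3*b/4)*M
      = (ε*(Cp^2 + b^2*ic2) + Cu + 1) + (3*b/4)*((ε*Cp + 1)*(1 + ic2)) := by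
    rw [hMd]; linear_combination (ε*(Cp^2 + b^2*ic2) + Cu + 1)*hbi
  have hM34 : ε*Cp^2 + ε*(b^2*ic2) + (ia/2 + 3*(ia/2)*c^4) + 1 ≤ (3*b/4)*M := by
    have h2 : ia/2 + 3*(ia/2)*c^4 ≤ Cu := by
      rw [hCud]
      linarith only [mul_nonneg hia0.le (sq_nonneg Cp), mul_nonneg hia0.le (sq_nonneg b), hia0]
    have h4 : 0 ≤ (3*b/4)*((ε*Cp + 1)*(1 + ic2)) := by positivity
    linarith only [hsplitM, h2, h4]
  have hM34b : (ia/2)*Cp^2 + 3*(ia/2)*b^2 + 1 ≤ (3*b/4)*M := by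
    have h2 : (ia/2)*Cp^2 + 3*(ia/2)*b^2 ≤ Cu := by
      rw [hCud]
      linarith only [mul_nonneg hia0.le (sq_nonneg (c^2)), hia0]
    have h4 : 0 ≤ (3*b/4)*((ε*Cp + 1)*(1 + ic2)) := by positivity
    have h5 : 0 ≤ ε*(Cp^2 + b^2*ic2) := by positivity
    linarith only [hsplitM, h2, h4, h5]
  have hMa : ε*Cp + 1 ≤ M := by
    have h1 : 0 ≤ (4*ib/3)*(ε*(Cp^2 + b^2*ic2) + Cu + 1) := by positivity
    have h3 : 0 ≤ (ε*Cp + 1)*ic2 := by positivity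
    rw [hMd]; linarith only [h1, h3]
  have hM1 : 1 ≤ M := by linarith only [hMa, mul_pos hε0 hCp]
  have hMb : ε*Cp + 1 ≤ M*c^2 := by
    have h1 : 0 ≤ ((4*ib/3)*(ε*(Cp^2 + b^2*ic2) + Cu + 1))*c^2 := by positivity
    have h2 : ((ε*Cp + 1)*(1 + ic2))*c^2 = (ε*Cp + 1)*(c^2 + 1) := by
      linear_combination (ε*Cp + 1)*hci
    have h3 : 0 ≤ (ε*Cp)*c^2 := by positivity
    rw [hMd]; linarith only [h1, h2, h3, sq_nonneg c]
  have hKa : Kd * (a/2) = (2 + Cp^2 + 6*b^2 + 6*c^4 + 2*a^2) * (a/2)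
      + (2 + Cp^2 + 6*b^2 + 6*c^4 + 2*a^2) := by
    rw [hKdd]; linear_combination (2 + Cp^2 + 6*b^2 + 6*c^4 + 2*a^2)*hai
  have hS1 : 0 ≤ (2 + Cp^2 + 6*b^2 + 6*c^4 + 2*a^2) * (a/2) := by positivity
  have cP0 : 1/2 ≤ Kd := by linarith only [hKd1]
  have cP1 : Cp^2/2 + 6*c^4 ≤ Kd := by
    rw [hKdd]; linarith only [hSia, sq_nonneg Cp, sq_nonneg b, sq_nonneg a]
  have cP2 : Cp^2/2 + 6*b^2 ≤ Kd := by
    rw [hKdd]; linarith only [hSia, sq_nonneg Cp, sq_nonneg (c^2), sq_nonneg a]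
  have cR : Cp^2/2 + 1 ≤ Kd*(a/2) := by
    linarith only [hKa, hS1, sq_nonneg Cp, sq_nonneg b, sq_nonneg (c^2), sq_nonneg a]
  have cR3 : Cp^2/2 + 1 + 2*a^2 ≤ Kd*(a/2) := by
    linarith only [hKa, hS1, sq_nonneg Cp, sq_nonneg b, sq_nonneg (c^2)]
  refine ⟨(1 + Kd)*(β + Ct), by positivity, ?_⟩
  intro T hT f u hf hu hIf hIE hPDE t ht
  -- ======== operator identities ========
  have hinnA : ∀ x y : H, ⟪Ahalf x, Ahalf y⟫ = ⟪x, A y⟫ := by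
    intro x y; rw [hAhalfsym, hhalf]
  have hAx : ∀ x : H, ⟪A x, x⟫ = ‖Ahalf x‖^2 := by
    intro x; rw [← hhalf x, hAhalfsym, real_inner_self_eq_norm_sq]
  have hAx' : ∀ x : H, ⟪x, A x⟫ = ‖Ahalf x‖^2 := by
    intro x; rw [← hinnA, real_inner_self_eq_norm_sq]
  have hPA : ∀ x : H, ‖Ahalf x‖ ≤ Cp * ‖A x‖ := by
    intro x; have h := hPoincare (Ahalf x); rwa [hhalf] at h
  have hNA : ∀ x : H, ‖A x‖ ≤ N * ‖Ahalf x‖ := by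
    intro x; have h := Ahalf.le_opNorm (Ahalf x); rwa [hhalf] at h
  -- ======== derivative bookkeeping ========
  set u1 : ℝ → H := deriv u with hu1d
  set u2 : ℝ → H := iteratedDeriv 2 u with hu2d
  set u3 : ℝ → H := iteratedDeriv 3 u with hu3d
  set u4 : ℝ → H := iteratedDeriv 4 u with hu4d
  have hdu : ∀ s, HasDerivAt u (u1 s) s := fun s =>
    ((hu.differentiable (by norm_num)) s).hasDerivAt
  have hdu1 : ∀ s, HasDerivAt u1 (u2 s) s := by
    intro s
    have hd : DifferentiableAt ℝ (iteratedDeriv 1 u) s :=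
      (hu.differentiable_iteratedDeriv 1 (by norm_num)) s
    rw [iteratedDeriv_one] at hd
    have h2 : u2 = deriv u1 := by rw [hu2d, hu1d, iteratedDeriv_succ, iteratedDeriv_one]
    rw [h2]; exact hd.hasDerivAt
  have hdu2 : ∀ s, HasDerivAt u2 (u3 s) s := by
    intro s
    have hd : DifferentiableAt ℝ (iteratedDeriv 2 u) s :=
      (hu.differentiable_iteratedDeriv 2 (by norm_num)) s
    have h2 : u3 = deriv u2 := by rw [hu3d, hu2d, iteratedDeriv_succ]
    rw [h2]; exact (hu2d ▸ hd).hasDerivAt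
  have hdu3 : ∀ s, HasDerivAt u3 (u4 s) s := by
    intro s
    have hd : DifferentiableAt ℝ (iteratedDeriv 3 u) s :=
      (hu.differentiable_iteratedDeriv 3 (by norm_num)) s
    have h2 : u4 = deriv u3 := by rw [hu4d, hu3d, iteratedDeriv_succ]
    rw [h2]; exact (hu3d ▸ hd).hasDerivAt
  set w : ℝ → H := fun τ => u1 τ + a • A (u τ) with hwd
  set w1 : ℝ → H := fun τ => u2 τ + a • A (u1 τ) with hw1d
  set w2 : ℝ → H := fun τ => u3 τ + a • A (u2 τ) with hw2d
  set w3 : ℝ → H := fun τ => u4 τ + a • A (u3 τ) with hw3d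
  have hdw : ∀ s, HasDerivAt w (w1 s) s := fun s =>
    (hdu1 s).add ((energy_hda_clm A (hdu s)).const_smul a)
  have hdw1 : ∀ s, HasDerivAt w1 (w2 s) s := fun s =>
    (hdu2 s).add ((energy_hda_clm A (hdu1 s)).const_smul a)
  have hdw2 : ∀ s, HasDerivAt w2 (w3 s) s := fun s =>
    (hdu3 s).add ((energy_hda_clm A (hdu2 s)).const_smul a)
  have hderivw : deriv w = w1 := funext fun s => (hdw s).deriv
  have hiter2w : iteratedDeriv 2 w = w2 := by
    rw [iteratedDeriv_succ, iteratedDeriv_one, hderivw]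
    exact funext fun s => (hdw1 s).deriv
  have hEQ : ∀ s ∈ Set.Ioo 0 T, w2 s = -(b • A (w1 s)) - c^2 • A (w s) - f s := by
    intro s hs
    have h := hPDE s hs
    rw [hiter2w, hderivw] at h
    have h2 : c ^ 2 • A (u1 s + a • A (u s)) = c^2 • A (w s) := rfl
    rw [h2] at h
    linear_combination (norm := module) h
  have hdf : ∀ s, HasDerivAt f (deriv f s) s := fun s =>
    ((hf.differentiable one_ne_zero) s).hasDerivAt
  have hEQ' : ∀ s ∈ Set.Ioo 0 T, w3 s = -(b • A (w2 s)) - c^2 • A (w1 s) - deriv f s := by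
    intro s hs
    set g : ℝ → H := fun τ => w2 τ + b • A (w1 τ) + c^2 • A (w τ) + f τ with hgd
    have hg0 : g =ᶠ[nhds s] (fun _ => (0 : H)) := by
      filter_upwards [isOpen_Ioo.mem_nhds hs] with τ hτ
      have h3 := hEQ τ hτ
      simp only [hgd, h3]; abel
    have hdg : HasDerivAt g (w3 s + b • A (w2 s) + c^2 • A (w1 s) + deriv f s) s :=
      (((hdw2 s).add ((energy_hda_clm A (hdw1 s)).const_smul b)).add
        ((energy_hda_clm A (hdw s)).const_smul (c^2))).add (hdf s)
    have h0 : deriv g s = 0 := by rw [Filter.EventuallyEq.deriv_eq hg0]; simp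
    have h5 := hdg.deriv
    rw [h0] at h5
    linear_combination (norm := module) h5.symm
  -- continuity
  have hcu : Continuous u := hu.continuous
  have hcu1 : Continuous u1 := by
    rw [hu1d, ← iteratedDeriv_one]; exact hu.continuous_iteratedDeriv 1 (by norm_num)
  have hcu2 : Continuous u2 := by
    rw [hu2d]; exact hu.continuous_iteratedDeriv 2 (by norm_num)
  have hcu3 : Continuous u3 := by
    rw [hu3d]; exact hu.continuous_iteratedDeriv 3 (by norm_num)
  have hcu4 : Continuous u4 := by
    rw [hu4d]; exact hu.continuous_iteratedDeriv 4 (by norm_num)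
  have hcw : Continuous w := by
    rw [hwd]; exact hcu1.add ((A.continuous.comp hcu).const_smul a)
  have hcw1 : Continuous w1 := by
    rw [hw1d]; exact hcu2.add ((A.continuous.comp hcu1).const_smul a)
  have hcw2 : Continuous w2 := by
    rw [hw2d]; exact hcu3.add ((A.continuous.comp hcu2).const_smul a)
  have hcw3 : Continuous w3 := by
    rw [hw3d]; exact hcu4.add ((A.continuous.comp hcu3).const_smul a)
  -- ======== scalar functionals ========
  set Fw : ℝ → ℝ := fun τ => (1/2) * ‖Ahalf (w1 τ)‖^2 + c^2 * ((1/2) * ‖A (w τ)‖^2) with hFwd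
  set Gw : ℝ → ℝ := fun τ => (1/2) * ‖Ahalf (w2 τ)‖^2 + c^2 * ((1/2) * ‖A (w1 τ)‖^2) with hGwd
  set Xc : ℝ → ℝ := fun τ => ⟪w1 τ, A (w τ)⟫ with hXcd
  set E2f : ℝ → ℝ := fun τ => (1/2) * ‖Ahalf (u3 τ)‖^2 + ((1/2) * ‖A (u2 τ)‖^2
    + ((1/2) * ‖Ahalf (A (u1 τ))‖^2 + (1/2) * ‖Ahalf (A (u τ))‖^2)) with hE2fd
  set L : ℝ → ℝ := fun τ => M * Fw τ + M * Gw τ + ε * Xc τ + E2f τ with hLd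
  set dFw : ℝ → ℝ := fun τ => ⟪Ahalf (w2 τ), Ahalf (w1 τ)⟫
    + c^2 * ⟪A (w1 τ), A (w τ)⟫ with hdFwd
  set dGw : ℝ → ℝ := fun τ => ⟪Ahalf (w3 τ), Ahalf (w2 τ)⟫
    + c^2 * ⟪A (w2 τ), A (w1 τ)⟫ with hdGwd
  set dXc : ℝ → ℝ := fun τ => ⟪w1 τ, A (w1 τ)⟫ + ⟪w2 τ, A (w τ)⟫ with hdXcd
  set dE2 : ℝ → ℝ := fun τ => ⟪Ahalf (u4 τ), Ahalf (u3 τ)⟫ + (⟪A (u3 τ), A (u2 τ)⟫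
    + (⟪Ahalf (A (u2 τ)), Ahalf (A (u1 τ))⟫ + ⟪Ahalf (A (u1 τ)), Ahalf (A (u τ))⟫)) with hdE2d
  set dL : ℝ → ℝ := fun τ => M * dFw τ + M * dGw τ + ε * dXc τ + dE2 τ with hdLd
  have hdFw : ∀ s, HasDerivAt Fw (dFw s) s := fun s =>
    (energy_hda_half_sq Ahalf (hdw1 s)).add ((energy_hda_half_sq A (hdw s)).const_mul (c^2))
  have hdGw : ∀ s, HasDerivAt Gw (dGw s) s := fun s =>
    (energy_hda_half_sq Ahalf (hdw2 s)).add ((energy_hda_half_sq A (hdw1 s)).const_mul (c^2))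
  have hdXc : ∀ s, HasDerivAt Xc (dXc s) s := fun s =>
    HasDerivAt.inner ℝ (hdw1 s) (energy_hda_clm A (hdw s))
  have hdE2 : ∀ s, HasDerivAt E2f (dE2 s) s := fun s =>
    (energy_hda_half_sq Ahalf (hdu3 s)).add ((energy_hda_half_sq A (hdu2 s)).add
      ((energy_hda_half_sq Ahalf (energy_hda_clm A (hdu1 s))).add
        (energy_hda_half_sq Ahalf (energy_hda_clm A (hdu s)))))
  have hdL : ∀ s, HasDerivAt L (dL s) s := fun s =>
    ((((hdFw s).const_mul M).add ((hdGw s).const_mul M)).add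
      ((hdXc s).const_mul ε)).add (hdE2 s)
  have hcdL : Continuous dL := by
    refine Continuous.add (Continuous.add (Continuous.add ?_ ?_) ?_) ?_
    · exact continuous_const.mul (((Ahalf.continuous.comp hcw2).inner
        (Ahalf.continuous.comp hcw1)).add (continuous_const.mul
        ((A.continuous.comp hcw1).inner (A.continuous.comp hcw))))
    · exact continuous_const.mul (((Ahalf.continuous.comp hcw3).inner
        (Ahalf.continuous.comp hcw2)).add (continuous_const.mul
        ((A.continuous.comp hcw2).inner (A.continuous.comp hcw1))))
    · exact continuous_const.mul ((hcw1.inner (A.continuous.comp hcw1)).add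
        (hcw2.inner (A.continuous.comp hcw)))
    · exact ((Ahalf.continuous.comp hcu4).inner (Ahalf.continuous.comp hcu3)).add
        (((A.continuous.comp hcu3).inner (A.continuous.comp hcu2)).add
          (((Ahalf.continuous.comp (A.continuous.comp hcu2)).inner
            (Ahalf.continuous.comp (A.continuous.comp hcu1))).add
          ((Ahalf.continuous.comp (A.continuous.comp hcu1)).inner
            (Ahalf.continuous.comp (A.continuous.comp hcu)))))
  -- ======== energy unfolding ========
  have hwfun : (fun τ => deriv u τ + a • A (u τ)) = w := by rw [hwd, hu1d]
  have hcalEeq : ∀ τ : ℝ, calE A Ahalf a u τ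
      = (1/2)*(‖Ahalf (w2 τ)‖^2 + ‖Ahalf (w1 τ)‖^2 + ‖A (w τ)‖^2)
      + (1/2)*(‖Ahalf (u3 τ)‖^2 + ‖A (u2 τ)‖^2
          + ‖Ahalf (A (u1 τ))‖^2 + ‖Ahalf (A (u τ))‖^2) := by
    intro τ
    simp only [calE, E1, E2, hwfun, hiter2w, hderivw, ← hu1d, ← hu2d, ← hu3d]
    rw [← hwd, hiter2w, hderivw]
  have hkEeq : ∀ τ : ℝ, kE A Ahalf u τ
      = ‖u4 τ‖^2 + ‖A (u3 τ)‖^2 + ‖Ahalf (A (u2 τ))‖^2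
        + ‖A (A (u1 τ))‖^2 + ‖A (A (u τ))‖^2 := by
    intro τ
    simp only [kE, ← hu1d, ← hu2d, ← hu3d, ← hu4d]
  have hcalEnn : ∀ τ : ℝ, 0 ≤ calE A Ahalf a u τ := by
    intro τ; rw [hcalEeq τ]; positivity
  have hkEnn : ∀ τ : ℝ, 0 ≤ kE A Ahalf u τ := by
    intro τ; rw [hkEeq τ]; positivity
  -- ======== comparison: calE ≤ L ========
  have hLlow : ∀ τ : ℝ, calE A Ahalf a u τ ≤ L τ := by
    intro τ
    rw [hcalEeq τ]
    simp only [hLd, hFwd, hGwd, hXcd, hE2fd]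
    have hw1n : ‖w1 τ‖ ≤ Cp * ‖Ahalf (w1 τ)‖ := hPoincare _
    have hi1 : -⟪w1 τ, A (w τ)⟫ ≤ ‖w1 τ‖ * ‖A (w τ)‖ := by
      have h1 := abs_real_inner_le_norm (w1 τ) (A (w τ))
      have h2 := neg_le_abs ⟪w1 τ, A (w τ)⟫
      linarith
    have hi2 : ‖w1 τ‖ * ‖A (w τ)‖ ≤ (Cp * ‖Ahalf (w1 τ)‖) * ‖A (w τ)‖ :=
      mul_le_mul_of_nonneg_right hw1n (norm_nonneg _)
    have hi3 : (Cp * ‖Ahalf (w1 τ)‖) * ‖A (w τ)‖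
        ≤ (Cp/2) * (‖Ahalf (w1 τ)‖^2 + ‖A (w τ)‖^2) := by
      linarith only [mul_nonneg hCp.le (sq_nonneg (‖Ahalf (w1 τ)‖ - ‖A (w τ)‖))]
    have hX : -⟪w1 τ, A (w τ)⟫ ≤ (Cp/2) * (‖Ahalf (w1 τ)‖^2 + ‖A (w τ)‖^2) := by
      linarith only [hi1, hi2, hi3]
    have hXe := mul_le_mul_of_nonneg_left hX hε0.le
    have t1 := mul_le_mul_of_nonneg_right hMa (sq_nonneg ‖Ahalf (w1 τ)‖)
    have t2 := mul_le_mul_of_nonneg_right hMb (sq_nonneg ‖A (w τ)‖)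
    have t3 := mul_le_mul_of_nonneg_right hM1 (sq_nonneg ‖Ahalf (w2 τ)‖)
    have hnn : 0 ≤ M * (c^2 * ((1/2) * ‖A (w1 τ)‖^2)) := by positivity
    linarith only [hXe, t1, t2, t3, hnn]
  -- ======== comparison: L 0 ≤ β * calE 0 ========
  have hco1 : M + M*(c^2*N^2) + ε*Cp ≤ β := by
    rw [hβd]
    linarith only [hM0.le, mul_nonneg hM0.le (sq_nonneg c), mul_nonneg hM0.le (sq_nonneg N)]
  have hco0 : M*c^2 + ε*Cp ≤ β := by
    rw [hβd]
    linarith only [hM0.le, mul_nonneg hM0.le (sq_nonneg c), mul_nonneg hM0.le (sq_nonneg N),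
      mul_nonneg (mul_nonneg hM0.le (sq_nonneg c)) (sq_nonneg N)]
  have hco2 : M ≤ β := by
    rw [hβd]
    linarith only [mul_nonneg hM0.le (sq_nonneg c), mul_nonneg hM0.le (sq_nonneg N),
      mul_nonneg (mul_nonneg hM0.le (sq_nonneg c)) (sq_nonneg N), mul_pos hε0 hCp]
  have hβ1 : 1 ≤ β := by
    rw [hβd]
    linarith only [mul_nonneg hM0.le (sq_nonneg c), mul_nonneg hM0.le (sq_nonneg N),
      mul_nonneg (mul_nonneg hM0.le (sq_nonneg c)) (sq_nonneg N), mul_pos hε0 hCp, hM0.le]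
  have hLhigh : L 0 ≤ β * calE A Ahalf a u 0 := by
    rw [hcalEeq 0]
    simp only [hLd, hFwd, hGwd, hXcd, hE2fd]
    have hw1n : ‖w1 0‖ ≤ Cp * ‖Ahalf (w1 0)‖ := hPoincare _
    have hi1 : ⟪w1 0, A (w 0)⟫ ≤ ‖w1 0‖ * ‖A (w 0)‖ := real_inner_le_norm _ _
    have hi2 : ‖w1 0‖ * ‖A (w 0)‖ ≤ (Cp * ‖Ahalf (w1 0)‖) * ‖A (w 0)‖ :=
      mul_le_mul_of_nonneg_right hw1n (norm_nonneg _)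
    have hi3 : (Cp * ‖Ahalf (w1 0)‖) * ‖A (w 0)‖
        ≤ (Cp/2) * (‖Ahalf (w1 0)‖^2 + ‖A (w 0)‖^2) := by
      linarith only [mul_nonneg hCp.le (sq_nonneg (‖Ahalf (w1 0)‖ - ‖A (w 0)‖))]
    have hX : ⟪w1 0, A (w 0)⟫ ≤ (Cp/2) * (‖Ahalf (w1 0)‖^2 + ‖A (w 0)‖^2) := by
      linarith only [hi1, hi2, hi3]
    have hXe := mul_le_mul_of_nonneg_left hX hε0.le
    have hp1 : ‖A (w1 0)‖^2 ≤ N^2 * ‖Ahalf (w1 0)‖^2 := by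
      linarith only [mul_self_le_mul_self (norm_nonneg (A (w1 0))) (hNA (w1 0))]
    have hp1M := mul_le_mul_of_nonneg_left hp1
      (show (0:ℝ) ≤ M * c^2 * (1/2) by positivity)
    have he2nn : 0 ≤ (1/2)*(‖Ahalf (u3 0)‖^2 + ‖A (u2 0)‖^2
        + ‖Ahalf (A (u1 0))‖^2 + ‖Ahalf (A (u 0))‖^2) := by positivity
    have ce2 := mul_le_mul_of_nonneg_right hβ1 he2nn
    have c1 := mul_le_mul_of_nonneg_right hco1 (sq_nonneg ‖Ahalf (w1 0)‖)
    have c0 := mul_le_mul_of_nonneg_right hco0 (sq_nonneg ‖A (w 0)‖)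
    have c2q := mul_le_mul_of_nonneg_right hco2 (sq_nonneg ‖Ahalf (w2 0)‖)
    linarith only [hXe, hp1M, ce2, c1, c0, c2q]
  -- ======== pointwise key estimate ========
  have key : ∀ s ∈ Set.Ioc (0:ℝ) t, dL s
      ≤ -(iK * (calE A Ahalf a u s + kE A Ahalf u s))
        + Ct * (‖f s‖^2 + ‖deriv f s‖^2) := by
    intro s hs
    rw [hCtd]
    have hsT : s ∈ Set.Ioo 0 T := ⟨hs.1, lt_of_le_of_lt hs.2 ht.2⟩
    have hEQs := hEQ s hsT
    have hEQ's := hEQ' s hsT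
    -- B1
    have hfA1 : -⟪f s, A (w1 s)⟫ ≤ ‖f s‖ * ‖A (w1 s)‖ := by
      have h1 := abs_real_inner_le_norm (f s) (A (w1 s))
      have h2 := neg_le_abs ⟪f s, A (w1 s)⟫
      linarith only [h1, h2]
    have e1 : dFw s = -(b * ‖A (w1 s)‖^2) - ⟪f s, A (w1 s)⟫ := by
      simp only [hdFwd]
      rw [hinnA, hEQs]
      simp only [inner_sub_left, inner_neg_left, real_inner_smul_left]
      rw [real_inner_self_eq_norm_sq, real_inner_comm (A (w s)) (A (w1 s))]
      ring
    have B1 : dFw s ≤ -(3*b/4)*‖A (w1 s)‖^2 + ib*‖f s‖^2 := by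
      have hy := energy_young' (‖A (w1 s)‖) (‖f s‖) (b/2) (2*ib) (by positivity)
        (by linear_combination hbi)
      rw [e1]; linarith only [hfA1, hy]
    -- B2
    have hfA2 : -⟪deriv f s, A (w2 s)⟫ ≤ ‖deriv f s‖ * ‖A (w2 s)‖ := by
      have h1 := abs_real_inner_le_norm (deriv f s) (A (w2 s))
      have h2 := neg_le_abs ⟪deriv f s, A (w2 s)⟫
      linarith only [h1, h2]
    have e2 : dGw s = -(b * ‖A (w2 s)‖^2) - ⟪deriv f s, A (w2 s)⟫ := by
      simp only [hdGwd]
      rw [hinnA, hEQ's]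
      simp only [inner_sub_left, inner_neg_left, real_inner_smul_left]
      rw [real_inner_self_eq_norm_sq, real_inner_comm (A (w1 s)) (A (w2 s))]
      ring
    have B2 : dGw s ≤ -(3*b/4)*‖A (w2 s)‖^2 + ib*‖deriv f s‖^2 := by
      have hy := energy_young' (‖A (w2 s)‖) (‖deriv f s‖) (b/2) (2*ib) (by positivity)
        (by linear_combination hbi)
      rw [e2]; linarith only [hfA2, hy]
    -- B3
    have e3 : dXc s = ‖Ahalf (w1 s)‖^2 - b*⟪A (w1 s), A (w s)⟫
        - c^2*‖A (w s)‖^2 - ⟪f s, A (w s)⟫ := by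
      simp only [hdXcd]
      rw [hEQs]
      simp only [inner_sub_left, inner_neg_left, real_inner_smul_left]
      rw [real_inner_self_eq_norm_sq, hAx']
      ring
    have hq1sq : ‖Ahalf (w1 s)‖^2 ≤ Cp^2 * ‖A (w1 s)‖^2 := by
      linarith only [mul_self_le_mul_self (norm_nonneg (Ahalf (w1 s))) (hPA (w1 s))]
    have hib3 : -(b*⟪A (w1 s), A (w s)⟫) ≤ b*(‖A (w1 s)‖*‖A (w s)‖) := by
      have h1 := abs_real_inner_le_norm (A (w1 s)) (A (w s))
      have h2 := neg_le_abs ⟪A (w1 s), A (w s)⟫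
      have h3 := mul_le_mul_of_nonneg_left (show -⟪A (w1 s), A (w s)⟫ ≤ ‖A (w1 s)‖*‖A (w s)‖
        by linarith only [h1, h2]) hb.le
      linarith only [h3]
    have hy1 := energy_young' (‖A (w s)‖) (b*‖A (w1 s)‖) (c^2/2) (2*ic2) (by positivity)
      (by linear_combination hci)
    have hy2 := energy_young' (‖A (w s)‖) (‖f s‖) (c^2/2) (2*ic2) (by positivity)
      (by linear_combination hci)
    have hfA0 : -⟪f s, A (w s)⟫ ≤ ‖f s‖ * ‖A (w s)‖ := by
      have h1 := abs_real_inner_le_norm (f s) (A (w s))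
      have h2 := neg_le_abs ⟪f s, A (w s)⟫
      linarith only [h1, h2]
    have B3 : dXc s ≤ (Cp^2 + b^2*ic2)*‖A (w1 s)‖^2 - (c^2/2)*‖A (w s)‖^2
        + ic2*‖f s‖^2 := by
      rw [e3]; linarith only [hq1sq, hib3, hy1, hy2, hfA0]
    -- B4 pieces
    have hu4e : u4 s = w3 s - a • A (u3 s) := by
      have h : w3 s = u4 s + a • A (u3 s) := by rw [hw3d]
      rw [h]; abel
    have hu3e : u3 s = w2 s - a • A (u2 s) := by
      have h : w2 s = u3 s + a • A (u2 s) := by rw [hw2d]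
      rw [h]; abel
    have hu2e : u2 s = w1 s - a • A (u1 s) := by
      have h : w1 s = u2 s + a • A (u1 s) := by rw [hw1d]
      rw [h]; abel
    have hu1e : u1 s = w s - a • A (u s) := by
      have h : w s = u1 s + a • A (u s) := by rw [hwd]
      rw [h]; abel
    have hw3n : ‖w3 s‖ ≤ b*‖A (w2 s)‖ + c^2*‖A (w1 s)‖ + ‖deriv f s‖ := by
      rw [hEQ's]
      have h1 := norm_sub_le (-(b • A (w2 s)) - c^2 • A (w1 s)) (deriv f s)
      have h2 := norm_sub_le (-(b • A (w2 s))) (c^2 • A (w1 s))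
      have h3 : ‖-(b • A (w2 s))‖ = b*‖A (w2 s)‖ := by
        rw [norm_neg, norm_smul, Real.norm_eq_abs, abs_of_pos hb]
      have h4 : ‖c^2 • A (w1 s)‖ = c^2*‖A (w1 s)‖ := by
        rw [norm_smul, Real.norm_eq_abs, abs_of_pos (show (0:ℝ) < c^2 by positivity)]
      linarith only [h1, h2, h3.le, h3.ge, h4.le, h4.ge]
    have hw3sq : ‖w3 s‖^2 ≤ 3*(b^2*‖A (w2 s)‖^2) + 3*(c^4*‖A (w1 s)‖^2)
        + 3*‖deriv f s‖^2 := by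
      have h1 := mul_self_le_mul_self (norm_nonneg (w3 s)) hw3n
      linarith only [h1, sq_nonneg (b*‖A (w2 s)‖ - c^2*‖A (w1 s)‖),
        sq_nonneg (b*‖A (w2 s)‖ - ‖deriv f s‖), sq_nonneg (c^2*‖A (w1 s)‖ - ‖deriv f s‖)]
    have e4a : ⟪Ahalf (u4 s), Ahalf (u3 s)⟫ = ⟪w3 s, A (u3 s)⟫ - a*‖A (u3 s)‖^2 := by
      rw [hinnA, hu4e, inner_sub_left, real_inner_smul_left, real_inner_self_eq_norm_sq]
    have B4a : ⟪Ahalf (u4 s), Ahalf (u3 s)⟫ ≤ -(a/2)*‖A (u3 s)‖^2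
        + (3*(ia/2)*(b^2*‖A (w2 s)‖^2) + 3*(ia/2)*(c^4*‖A (w1 s)‖^2)
          + 3*(ia/2)*‖deriv f s‖^2) := by
      have hi := real_inner_le_norm (w3 s) (A (u3 s))
      have hy := energy_young' (‖A (u3 s)‖) (‖w3 s‖) a ia ha hai
      have hsc := mul_le_mul_of_nonneg_left hw3sq (show (0:ℝ) ≤ ia/2 by positivity)
      rw [e4a]; linarith only [hi, hy, hsc]
    have e4b : ⟪A (u3 s), A (u2 s)⟫ = ⟪A (w2 s), A (u2 s)⟫
        - a*‖Ahalf (A (u2 s))‖^2 := by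
      rw [hu3e]
      simp only [_root_.map_sub, _root_.map_smul, inner_sub_left, real_inner_smul_left]
      rw [hAx (A (u2 s))]
    have B4b : ⟪A (u3 s), A (u2 s)⟫ ≤ -(a/2)*‖Ahalf (A (u2 s))‖^2
        + (ia/2)*(Cp^2*‖A (w2 s)‖^2) := by
      have hi := real_inner_le_norm (A (w2 s)) (A (u2 s))
      have hz2 : ‖A (u2 s)‖ ≤ Cp*‖Ahalf (A (u2 s))‖ := hPoincare _
      have hstep := mul_le_mul_of_nonneg_left hz2 (norm_nonneg (A (w2 s)))
      have hy := energy_young' (‖Ahalf (A (u2 s))‖) (Cp*‖A (w2 s)‖) a ia ha hai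
      rw [e4b]; linarith only [hi, hstep, hy]
    have e4c : ⟪Ahalf (A (u2 s)), Ahalf (A (u1 s))⟫ = ⟪A (w1 s), A (A (u1 s))⟫
        - a*‖A (A (u1 s))‖^2 := by
      rw [hinnA, hu2e]
      simp only [_root_.map_sub, _root_.map_smul, inner_sub_left, real_inner_smul_left]
      rw [real_inner_self_eq_norm_sq]
    have B4c : ⟪Ahalf (A (u2 s)), Ahalf (A (u1 s))⟫ ≤ -(a/2)*‖A (A (u1 s))‖^2
        + (ia/2)*‖A (w1 s)‖^2 := by
      have hi := real_inner_le_norm (A (w1 s)) (A (A (u1 s)))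
      have hy := energy_young' (‖A (A (u1 s))‖) (‖A (w1 s)‖) a ia ha hai
      rw [e4c]; linarith only [hi, hy]
    have e4d : ⟪Ahalf (A (u1 s)), Ahalf (A (u s))⟫ = ⟪A (w s), A (A (u s))⟫
        - a*‖A (A (u s))‖^2 := by
      rw [hinnA, hu1e]
      simp only [_root_.map_sub, _root_.map_smul, inner_sub_left, real_inner_smul_left]
      rw [real_inner_self_eq_norm_sq]
    have B4d : ⟪Ahalf (A (u1 s)), Ahalf (A (u s))⟫ ≤ -(a/2)*‖A (A (u s))‖^2
        + (ia/2)*‖A (w s)‖^2 := by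
      have hi := real_inner_le_norm (A (w s)) (A (A (u s)))
      have hy := energy_young' (‖A (A (u s))‖) (‖A (w s)‖) a ia ha hai
      rw [e4d]; linarith only [hi, hy]
    have B4 : dE2 s ≤ -(a/2)*‖A (u3 s)‖^2 - (a/2)*‖Ahalf (A (u2 s))‖^2
        - (a/2)*‖A (A (u1 s))‖^2 - (a/2)*‖A (A (u s))‖^2
        + (ia/2)*‖A (w s)‖^2 + (ia/2)*‖A (w1 s)‖^2 + (ia/2)*(Cp^2*‖A (w2 s)‖^2)
        + (3*(ia/2)*(b^2*‖A (w2 s)‖^2) + 3*(ia/2)*(c^4*‖A (w1 s)‖^2)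
          + 3*(ia/2)*‖deriv f s‖^2) := by
      simp only [hdE2d]
      linarith only [B4a, B4b, B4c, B4d]
    -- step 1 : full dissipation bound
    have hb1 := mul_le_mul_of_nonneg_left B1 hM0.le
    have hb2 := mul_le_mul_of_nonneg_left B2 hM0.le
    have hb3 := mul_le_mul_of_nonneg_left B3 hε0.le
    have hcp1 := mul_le_mul_of_nonneg_right hM34 (sq_nonneg ‖A (w1 s)‖)
    have hcp2 := mul_le_mul_of_nonneg_right hM34b (sq_nonneg ‖A (w2 s)‖)
    have hcp0 := mul_le_mul_of_nonneg_right hε2 (sq_nonneg ‖A (w s)‖)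
    have step1 : dL s ≤ -(‖A (w s)‖^2 + ‖A (w1 s)‖^2 + ‖A (w2 s)‖^2)
        - (a/2)*(‖A (A (u s))‖^2 + ‖A (A (u1 s))‖^2 + ‖Ahalf (A (u2 s))‖^2
            + ‖A (u3 s)‖^2)
        + (M*ib + ε*ic2)*‖f s‖^2 + (M*ib + 3*(ia/2))*‖deriv f s‖^2 := by
      simp only [hdLd]
      linarith only [hb1, hb2, hb3, B4, hcp1, hcp2, hcp0]
    -- step 2 : energy comparison
    have hq2sq : ‖Ahalf (w2 s)‖^2 ≤ Cp^2 * ‖A (w2 s)‖^2 := by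
      linarith only [mul_self_le_mul_self (norm_nonneg (Ahalf (w2 s))) (hPA (w2 s))]
    have hz3sq : ‖Ahalf (u3 s)‖^2 ≤ Cp^2 * ‖A (u3 s)‖^2 := by
      linarith only [mul_self_le_mul_self (norm_nonneg (Ahalf (u3 s))) (hPA (u3 s))]
    have hz2sq : ‖A (u2 s)‖^2 ≤ Cp^2 * ‖Ahalf (A (u2 s))‖^2 := by
      linarith only [mul_self_le_mul_self (norm_nonneg (A (u2 s))) (hPoincare (A (u2 s)))]
    have hz1sq : ‖Ahalf (A (u1 s))‖^2 ≤ Cp^2 * ‖A (A (u1 s))‖^2 := by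
      linarith only [mul_self_le_mul_self (norm_nonneg (Ahalf (A (u1 s)))) (hPA (A (u1 s)))]
    have hz0sq : ‖Ahalf (A (u s))‖^2 ≤ Cp^2 * ‖A (A (u s))‖^2 := by
      linarith only [mul_self_le_mul_self (norm_nonneg (Ahalf (A (u s)))) (hPA (A (u s)))]
    have hz4n : ‖u4 s‖ ≤ ‖w3 s‖ + a*‖A (u3 s)‖ := by
      rw [hu4e]
      have h1 := norm_sub_le (w3 s) (a • A (u3 s))
      have h2 : ‖a • A (u3 s)‖ = a*‖A (u3 s)‖ := by
        rw [norm_smul, Real.norm_eq_abs, abs_of_pos ha]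
      linarith only [h1, h2.le, h2.ge]
    have hz4sq : ‖u4 s‖^2 ≤ 6*(b^2*‖A (w2 s)‖^2) + 6*(c^4*‖A (w1 s)‖^2)
        + 6*‖deriv f s‖^2 + 2*(a^2*‖A (u3 s)‖^2) := by
      have h1 := mul_self_le_mul_self (norm_nonneg (u4 s)) hz4n
      linarith only [h1, hw3sq, sq_nonneg (‖w3 s‖ - a*‖A (u3 s)‖)]
    have hcq0 := mul_le_mul_of_nonneg_right cP0 (sq_nonneg ‖A (w s)‖)
    have hcq1 := mul_le_mul_of_nonneg_right cP1 (sq_nonneg ‖A (w1 s)‖)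
    have hcq2 := mul_le_mul_of_nonneg_right cP2 (sq_nonneg ‖A (w2 s)‖)
    have hcr0 := mul_le_mul_of_nonneg_right cR (sq_nonneg ‖A (A (u s))‖)
    have hcr1 := mul_le_mul_of_nonneg_right cR (sq_nonneg ‖A (A (u1 s))‖)
    have hcr2 := mul_le_mul_of_nonneg_right cR (sq_nonneg ‖Ahalf (A (u2 s))‖)
    have hcr3 := mul_le_mul_of_nonneg_right cR3 (sq_nonneg ‖A (u3 s)‖)
    have step2 : calE A Ahalf a u s + kE A Ahalf u s
        ≤ Kd*((‖A (w s)‖^2 + ‖A (w1 s)‖^2 + ‖A (w2 s)‖^2)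
            + (a/2)*(‖A (A (u s))‖^2 + ‖A (A (u1 s))‖^2 + ‖Ahalf (A (u2 s))‖^2
              + ‖A (u3 s)‖^2))
          + 6*‖deriv f s‖^2 := by
      rw [hcalEeq s, hkEeq s]
      linarith only [hq1sq, hq2sq, hz3sq, hz2sq, hz1sq, hz0sq, hz4sq,
        hcq0, hcq1, hcq2, hcr0, hcr1, hcr2, hcr3]
    -- combine
    have hstep2' := mul_le_mul_of_nonneg_left step2 hiK0.le
    have heqiK : iK*(Kd*((‖A (w s)‖^2 + ‖A (w1 s)‖^2 + ‖A (w2 s)‖^2)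
            + (a/2)*(‖A (A (u s))‖^2 + ‖A (A (u1 s))‖^2 + ‖Ahalf (A (u2 s))‖^2
              + ‖A (u3 s)‖^2)) + 6*‖deriv f s‖^2)
        = ((‖A (w s)‖^2 + ‖A (w1 s)‖^2 + ‖A (w2 s)‖^2)
            + (a/2)*(‖A (A (u s))‖^2 + ‖A (A (u1 s))‖^2 + ‖Ahalf (A (u2 s))‖^2
              + ‖A (u3 s)‖^2)) + 6*(iK*‖deriv f s‖^2) := by
      linear_combination (((‖A (w s)‖^2 + ‖A (w1 s)‖^2 + ‖A (w2 s)‖^2)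
            + (a/2)*(‖A (A (u s))‖^2 + ‖A (A (u1 s))‖^2 + ‖Ahalf (A (u2 s))‖^2
              + ‖A (u3 s)‖^2))) * hKi
    have hiKG : 6*(iK*‖deriv f s‖^2) ≤ 6*‖deriv f s‖^2 := by
      have h1 := mul_le_mul_of_nonneg_right hiK1 (sq_nonneg ‖deriv f s‖)
      linarith only [h1]
    have hεic : 0 ≤ ε*ic2 := by positivity
    have hia2 : 0 ≤ 3*(ia/2) := by positivity
    have hEEb : iK*(calE A Ahalf a u s + kE A Ahalf u s)
        ≤ ((‖A (w s)‖^2 + ‖A (w1 s)‖^2 + ‖A (w2 s)‖^2)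
            + (a/2)*(‖A (A (u s))‖^2 + ‖A (A (u1 s))‖^2 + ‖Ahalf (A (u2 s))‖^2
              + ‖A (u3 s)‖^2)) + 6*(iK*‖deriv f s‖^2) := by
      linarith only [hstep2', heqiK]
    have h5 : dL s ≤ -(iK * (calE A Ahalf a u s + kE A Ahalf u s))
        + (M*ib + ε*ic2)*‖f s‖^2 + (M*ib + 3*(ia/2) + 6)*‖deriv f s‖^2 := by
      linarith only [step1, hEEb, hiKG]
    linarith only [h5,
      mul_nonneg hia0.le (sq_nonneg ‖f s‖), sq_nonneg ‖f s‖,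
      mul_nonneg hεic (sq_nonneg ‖deriv f s‖), sq_nonneg ‖deriv f s‖]
  -- ======== integration ========
  have ht0 : (0:ℝ) < t := ht.1
  have hftc : ∫ τ in Set.Ioc 0 t, dL τ = L t - L 0 := by
    have h1 := intervalIntegral.integral_eq_sub_of_hasDerivAt
      (f := L) (f' := dL) (fun x _ => hdL x) ((hcdL.intervalIntegrable 0 t))
    rw [intervalIntegral.integral_of_le ht0.le] at h1
    exact h1
  have hIEt : IntegrableOn (fun τ => calE A Ahalf a u τ + kE A Ahalf u τ)
      (Set.Ioc 0 t) volume := hIE.mono_set (Set.Ioc_subset_Ioc_right ht.2.le)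
  have hIft : IntegrableOn (fun τ => ‖f τ‖^2 + ‖deriv f τ‖^2)
      (Set.Ioc 0 t) volume := hIf.mono_set (Set.Ioc_subset_Ioc_right ht.2.le)
  have hIdL : IntegrableOn dL (Set.Ioc 0 t) volume := hcdL.integrableOn_Ioc
  have hIrhs : IntegrableOn (fun τ => -iK * (calE A Ahalf a u τ + kE A Ahalf u τ)
      + Ct * (‖f τ‖^2 + ‖deriv f τ‖^2)) (Set.Ioc 0 t) volume :=
    (hIEt.const_mul (-iK)).add (hIft.const_mul Ct)
  have hmono : ∫ τ in Set.Ioc 0 t, dL τ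
      ≤ ∫ τ in Set.Ioc 0 t, (-iK * (calE A Ahalf a u τ + kE A Ahalf u τ)
          + Ct * (‖f τ‖^2 + ‖deriv f τ‖^2)) := by
    refine setIntegral_mono_on hIdL hIrhs measurableSet_Ioc ?_
    intro s hs
    have h1 := key s hs
    linarith only [h1]
  have hsplit : ∫ τ in Set.Ioc 0 t, (-iK * (calE A Ahalf a u τ + kE A Ahalf u τ)
        + Ct * (‖f τ‖^2 + ‖deriv f τ‖^2))
      = -iK * (∫ τ in Set.Ioc 0 t, (calE A Ahalf a u τ + kE A Ahalf u τ))
        + Ct * (∫ τ in Set.Ioc 0 t, (‖f τ‖^2 + ‖deriv f τ‖^2)) := by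
    rw [integral_add (hIEt.const_mul (-iK)) (hIft.const_mul Ct),
      integral_const_mul, integral_const_mul]
  have hI0 : 0 ≤ ∫ τ in Set.Ioc 0 t, (calE A Ahalf a u τ + kE A Ahalf u τ) :=
    setIntegral_nonneg measurableSet_Ioc fun τ _ => by
      linarith only [hcalEnn τ, hkEnn τ]
  have hJ0 : 0 ≤ ∫ τ in Set.Ioc 0 t, (‖f τ‖^2 + ‖deriv f τ‖^2) :=
    setIntegral_nonneg measurableSet_Ioc fun τ _ => by positivity
  -- ======== final assembly ========
  set I : ℝ := ∫ τ in Set.Ioc 0 t, (calE A Ahalf a u τ + kE A Ahalf u τ) with hId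
  set J : ℝ := ∫ τ in Set.Ioc 0 t, (‖f τ‖^2 + ‖deriv f τ‖^2) with hJd
  have hLtI : L t + iK*I ≤ L 0 + Ct*J := by
    have h1 : L t - L 0 ≤ -iK*I + Ct*J := by
      rw [← hftc, ← hsplit]; exact hmono
    linarith only [h1]
  have hcalt : calE A Ahalf a u t ≤ L t := hLlow t
  have hcal0nn : 0 ≤ calE A Ahalf a u 0 := hcalEnn 0
  have hcaltnn : 0 ≤ calE A Ahalf a u t := hcalEnn t
  have hupper : iK*I ≤ β*(calE A Ahalf a u 0) + Ct*J := by
    linarith only [hLtI, hLhigh, hcalt, hcaltnn]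
  have hIbound : I ≤ Kd*(β*(calE A Ahalf a u 0) + Ct*J) := by
    have h1 := mul_le_mul_of_nonneg_left hupper hKd0.le
    have h2 : Kd*(iK*I) = I := by linear_combination I * hKi
    linarith only [h1, h2]
  have hmain : calE A Ahalf a u t + I
      ≤ (1+Kd)*(β*(calE A Ahalf a u 0) + Ct*J) := by
    have h3 : calE A Ahalf a u t ≤ β*(calE A Ahalf a u 0) + Ct*J := by
      have h4 : 0 ≤ iK*I := mul_nonneg hiK0.le hI0
      linarith only [hcalt, hLtI, hLhigh, h4]
    have h5 := mul_le_mul_of_nonneg_left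
      (show β*(calE A Ahalf a u 0) + Ct*J ≥ 0 by positivity) (by linarith only [hKd0] : (0:ℝ) ≤ Kd)
    linarith only [h3, hIbound]
  have hfin : (1+Kd)*(β*(calE A Ahalf a u 0) + Ct*J)
      ≤ (1+Kd)*(β+Ct)*(calE A Ahalf a u 0 + J) := by
    have h1 : 0 ≤ (1+Kd)*(β*J + Ct*(calE A Ahalf a u 0)) := by positivity
    linarith only [h1]
  linarith only [hmain, hfin]
end
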